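/- An integer bidirected q-flow g in a capacitated bidirected graph Γ is maximum if and only if the residual bidirected graph Γ_g contains no residual closed q–q walk leaving q twice that traverses each residual edge e at most c_g(e) times. -/

import Mathlib

/-- A bidirected graph on node type `N`: each edge has two endpoints `endA`,
`endB` and, at each endpoint, a direction (`outA e = true` means the edge
leaves its first endpoint, similarly `outB`).  An edge with `endA e = endB e`
is a loop. -/
structure BDGraph (N : Type) where
  E : Type
  fintypeE : Fintype E
  endA : E → N
  endB : E → N
  outA : E → Bool
  outB : E → Bool

attribute [instance] BDGraph.fintypeE

namespace BDGraph

variable {N : Type} (Γ : BDGraph N)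

open Classical in
/-- Divergence of an edge function `f` at a node `v`: total flow leaving `v`
minus total flow entering `v`; a loop at `v` is counted twice. -/
noncomputable def div (f : Γ.E → ℚ) (v : N) : ℚ :=
  (∑ e, if Γ.endA e = v then (if Γ.outA e then f e else -f e) else 0)
  + (∑ e, if Γ.endB e = v then (if Γ.outB e then f e else -f e) else 0)

/-- A bidirected `q`-flow: nonnegative with zero divergence at every node
other than the source `q`.  Its value is `Γ.div f q`. -/
def IsBDFlow (q : N) (f : Γ.E → ℚ) : Prop :=
  (∀ e, 0 ≤ f e) ∧ ∀ v, v ≠ q → Γ.div f v = 0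

/-- Feasibility of a flow with respect to integer capacities `c`. -/
def FlowFeasible (c : Γ.E → ℕ) (f : Γ.E → ℚ) : Prop :=
  ∀ e, f e ≤ (c e : ℚ)

/-- Integrality of an edge function. -/
def IsIntegral (f : Γ.E → ℚ) : Prop := ∀ e, ∃ z : ℤ, f e = (z : ℚ)

open Classical in
/-- The flip at a node set `X`: the directions of all edge-ends at nodes of
`X` are reversed. -/
noncomputable def flip (X : Set N) : BDGraph N where
  E := Γ.E
  fintypeE := Γ.fintypeE
  endA := Γ.endA
  endB := Γ.endB
  outA := fun e => if Γ.endA e ∈ X then !Γ.outA e else Γ.outA e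
  outB := fun e => if Γ.endB e ∈ X then !Γ.outB e else Γ.outB e

open Classical in
/-- `c[A⃗,B]` : total capacity of the edges leaving `A` whose other endpoint
lies in `B` (for disjoint `A`, `B`). -/
noncomputable def capOutTo (c : Γ.E → ℕ) (A B : Set N) : ℕ :=
  ∑ e, ((if Γ.endA e ∈ A ∧ Γ.endB e ∈ B ∧ Γ.outA e then c e else 0)
    + (if Γ.endB e ∈ A ∧ Γ.endA e ∈ B ∧ Γ.outB e then c e else 0))

open Classical in
/-- `c[A,B]` : total capacity of the edges with one endpoint in `A` and the
other in `B` (for disjoint `A`, `B`), irrespective of directions. -/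
noncomputable def capBetween (c : Γ.E → ℕ) (A B : Set N) : ℕ :=
  ∑ e, if (Γ.endA e ∈ A ∧ Γ.endB e ∈ B) ∨ (Γ.endA e ∈ B ∧ Γ.endB e ∈ A)
    then c e else 0

open Classical in
/-- `c[A⃗,A⃖⃗]` : total capacity of the edges leaving `A` at both endpoints
(including twice-leaving loops). -/
noncomputable def capOutBoth (c : Γ.E → ℕ) (A : Set N) : ℕ :=
  ∑ e, if Γ.endA e ∈ A ∧ Γ.endB e ∈ A ∧ Γ.outA e ∧ Γ.outB e then c e else 0

/-- `c[A⃗]` : total capacity of the edges leaving `A` into the complement. -/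
noncomputable def capOut (c : Γ.E → ℕ) (A : Set N) : ℕ :=
  Γ.capOutTo c A Aᶜ

/-- A step of a bidirected walk: an edge together with the direction of
traversal (`fwd = true`: from `endA` to `endB`). -/
structure Step where
  e : Γ.E
  fwd : Bool

variable {Γ}

/-- The node at which a step starts. -/
def Step.src (s : Γ.Step) : N := if s.fwd then Γ.endA s.e else Γ.endB s.e

/-- The node at which a step ends. -/
def Step.dst (s : Γ.Step) : N := if s.fwd then Γ.endB s.e else Γ.endA s.e

/-- Whether the edge of the step leaves the start node of the step. -/
def Step.outSrc (s : Γ.Step) : Bool := if s.fwd then Γ.outA s.e else Γ.outB s.e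

/-- Whether the edge of the step leaves the end node of the step. -/
def Step.outDst (s : Γ.Step) : Bool := if s.fwd then Γ.outB s.e else Γ.outA s.e

variable (Γ)

/-- A (nontrivial) bidirected walk from `u` to `v`, given by its list of
steps: consecutive steps share a node at which they form a transit pair
(one edge enters the node, the other leaves it). -/
def IsBDWalk (u v : N) (L : List Γ.Step) : Prop :=
  L ≠ [] ∧ (∀ s ∈ L.head?, s.src = u) ∧ (∀ s ∈ L.getLast?, s.dst = v) ∧
    L.Chain' fun s t => s.dst = t.src ∧ s.outDst ≠ t.outSrc

/-- A closed `q`–`q` walk that leaves `q` twice (at its start and its end). -/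
def IsClosedQWalk (q : N) (L : List Γ.Step) : Prop :=
  Γ.IsBDWalk q q L ∧ (∀ s ∈ L.head?, s.outSrc = true) ∧
    ∀ s ∈ L.getLast?, s.outDst = true

open Classical in
/-- The residual bidirected graph of a flow `g` with capacities `c`: it keeps
every unsaturated edge and adds the reverse of every edge carrying flow. -/
noncomputable def residual (c : Γ.E → ℕ) (g : Γ.E → ℚ) : BDGraph N where
  E := {e : Γ.E // g e < (c e : ℚ)} ⊕ {e : Γ.E // 0 < g e}
  fintypeE := by classical infer_instance
  endA := Sum.elim (fun e => Γ.endA e.1) fun e => Γ.endA e.1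
  endB := Sum.elim (fun e => Γ.endB e.1) fun e => Γ.endB e.1
  outA := Sum.elim (fun e => Γ.outA e.1) fun e => !Γ.outA e.1
  outB := Sum.elim (fun e => Γ.outB e.1) fun e => !Γ.outB e.1

/-- The residual capacities on the residual graph. -/
noncomputable def resCap (c : Γ.E → ℕ) (g : Γ.E → ℚ) :
    (Γ.residual c g).E → ℚ :=
  Sum.elim (fun e => (c e.1 : ℚ) - g e.1) fun e => g e.1


variable {Γ}

open Classical

lemma div_add (f g : Γ.E → ℚ) (v : N) :
    Γ.div (fun e => f e + g e) v = Γ.div f v + Γ.div g v := by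
  simp only [div, ← Finset.sum_add_distrib]
  apply Finset.sum_congr rfl
  intro e _
  split_ifs <;> ring

lemma div_neg (g : Γ.E → ℚ) (v : N) :
    Γ.div (fun e => -g e) v = -Γ.div g v := by
  simp only [div, neg_add, ← Finset.sum_neg_distrib]
  apply congrArg₂ <;> apply Finset.sum_congr rfl <;> intro e _ <;> split_ifs <;> ring

lemma div_sub (f g : Γ.E → ℚ) (v : N) :
    Γ.div (fun e => f e - g e) v = Γ.div f v - Γ.div g v := by
  have : Γ.div (fun e => f e - g e) v = Γ.div (fun e => f e + -g e) v := by
    simp [sub_eq_add_neg]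
  rw [this, div_add, div_neg]; ring

lemma div_zero' (v : N) : Γ.div (fun _ => (0:ℚ)) v = 0 := by
  simp [div]

/-- divergence contribution of a single edge -/
noncomputable def phi (Δ : BDGraph N) (x : Δ.E) (v : N) : ℚ :=
  (if Δ.endA x = v then (if Δ.outA x then 1 else -1) else 0)
  + (if Δ.endB x = v then (if Δ.outB x then 1 else -1) else 0)

lemma div_single (x : Γ.E) (v : N) :
    Γ.div (fun e => if e = x then (1:ℚ) else 0) v = phi Γ x v := by
  simp only [div, phi]
  congr 1
  · rw [show (∑ e, if Γ.endA e = v then (if Γ.outA e then (if e = x then (1:ℚ) else 0) else -(if e = x then (1:ℚ) else 0)) else 0) = ∑ e, if e = x then (if Γ.endA e = v then (if Γ.outA e then (1:ℚ) else -1) else 0) else 0 from Finset.sum_congr rfl (by intro e _; split_ifs <;> simp)]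
    simp [Finset.sum_ite_eq']
  · rw [show (∑ e, if Γ.endB e = v then (if Γ.outB e then (if e = x then (1:ℚ) else 0) else -(if e = x then (1:ℚ) else 0)) else 0) = ∑ e, if e = x then (if Γ.endB e = v then (if Γ.outB e then (1:ℚ) else -1) else 0) else 0 from Finset.sum_congr rfl (by intro e _; split_ifs <;> simp)]
    simp [Finset.sum_ite_eq']

lemma phi_step (s : Γ.Step) (v : N) :
    phi Γ s.e v = (if s.src = v then (if s.outSrc then (1:ℚ) else -1) else 0)
      + (if s.dst = v then (if s.outDst then (1:ℚ) else -1) else 0) := by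
  rcases s with ⟨e, (_|_)⟩ <;>
    simp [phi, Step.src, Step.dst, Step.outSrc, Step.outDst] <;> ring

lemma sum_phi_walk (v : N) :
    ∀ (L : List Γ.Step) (s : Γ.Step),
      ((s :: L).Chain' fun s t => s.dst = t.src ∧ s.outDst ≠ t.outSrc) →
      (((s :: L).map fun t => phi Γ t.e v).sum)
        = (if s.src = v then (if s.outSrc then (1:ℚ) else -1) else 0)
          + (if ((s :: L).getLast (by simp)).dst = v
              then (if ((s :: L).getLast (by simp)).outDst then (1:ℚ) else -1) else 0) := by
  intro L
  induction L with
  | nil =>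
      intro s _
      simp [phi_step]; rfl
  | cons t L ih =>
      intro s hch
      replace hch := List.isChain_cons_cons.mp hch
      obtain ⟨⟨hdst, hout⟩, hch⟩ := hch
      have := ih t hch
      simp only [List.map_cons, List.sum_cons] at this ⊢
      rw [this]
      have hlast : (s :: t :: L).getLast (by simp) = (t :: L).getLast (by simp) := by
        simp [List.getLast_cons]
      rw [phi_step]
      have hz : (if s.dst = v then (if s.outDst then (1:ℚ) else -1) else 0)
          + (if t.src = v then (if t.outSrc then (1:ℚ) else -1) else 0) = 0 := by
        rw [← hdst]
        rcases Bool.eq_false_or_eq_true s.outDst with h1 | h1 <;>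
          rcases Bool.eq_false_or_eq_true t.outSrc with h2 | h2 <;>
            simp_all <;> split_ifs <;> ring
      simp only [hlast]
      ring_nf
      ring_nf at hz
      linarith [hz]

lemma exists_out_end (m : Γ.E → ℕ) (u : N)
    (h : 0 < Γ.div (fun x => (m x : ℚ)) u) :
    ∃ x, 0 < m x ∧ ((Γ.endA x = u ∧ Γ.outA x = true) ∨ (Γ.endB x = u ∧ Γ.outB x = true)) := by
  by_contra hc
  have hle : Γ.div (fun x => (m x : ℚ)) u ≤ 0 := by
    apply add_nonpos
    · apply Finset.sum_nonpos; intro x _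
      split_ifs with h1 h2
      · have hm : m x = 0 := by
          by_contra hm
          exact hc ⟨x, Nat.pos_of_ne_zero hm, Or.inl ⟨h1, h2⟩⟩
        simp [hm]
      · simp
      · exact le_refl 0
    · apply Finset.sum_nonpos; intro x _
      split_ifs with h1 h2
      · have hm : m x = 0 := by
          by_contra hm
          exact hc ⟨x, Nat.pos_of_ne_zero hm, Or.inr ⟨h1, h2⟩⟩
        simp [hm]
      · simp
      · exact le_refl 0
  linarith

lemma exists_in_end (m : Γ.E → ℕ) (u : N)
    (h : Γ.div (fun x => (m x : ℚ)) u < 0) :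
    ∃ x, 0 < m x ∧ ((Γ.endA x = u ∧ Γ.outA x = false) ∨ (Γ.endB x = u ∧ Γ.outB x = false)) := by
  by_contra hc
  have hle : 0 ≤ Γ.div (fun x => (m x : ℚ)) u := by
    apply add_nonneg
    · apply Finset.sum_nonneg; intro x _
      split_ifs with h1 h2
      · simp
      · have hm : m x = 0 := by
          by_contra hm
          exact hc ⟨x, Nat.pos_of_ne_zero hm,
            Or.inl ⟨h1, Bool.eq_false_iff.mpr h2⟩⟩
        simp [hm]
      · exact le_refl 0
    · apply Finset.sum_nonneg; intro x _
      split_ifs with h1 h2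
      · simp
      · have hm : m x = 0 := by
          by_contra hm
          exact hc ⟨x, Nat.pos_of_ne_zero hm,
            Or.inr ⟨h1, Bool.eq_false_iff.mpr h2⟩⟩
        simp [hm]
      · exact le_refl 0
  linarith

open Classical in
lemma div_update (m : Γ.E → ℕ) (x : Γ.E) (hx : 0 < m x) (v : N) :
    Γ.div (fun y => ((Function.update m x (m x - 1)) y : ℚ)) v
      = Γ.div (fun y => (m y : ℚ)) v - phi Γ x v := by
  have hfun : ∀ y, ((Function.update m x (m x - 1)) y : ℚ)
      = (m y : ℚ) - (if y = x then (1:ℚ) else 0) := by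
    intro y
    by_cases hy : y = x
    · subst hy
      rw [Function.update_self, if_pos rfl, Nat.cast_sub hx]
      simp
    · simp [Function.update_of_ne hy, hy]
  calc Γ.div (fun y => ((Function.update m x (m x - 1)) y : ℚ)) v
      = Γ.div (fun y => (m y : ℚ) - (if y = x then (1:ℚ) else 0)) v := by
        congr 1; funext y; exact hfun y
    _ = _ := by rw [div_sub, div_single]

open Classical in
lemma extract (Δ : BDGraph N) (q : N) :
    ∀ n : ℕ, ∀ m : Δ.E → ℕ, (∑ x, m x) = n → ∀ u : N, ∀ b : Bool, ∀ K : ℤ, 0 ≤ K →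
    (u = q → b = true) →
    (∀ v, Δ.div (fun x => (m x : ℚ)) v
        = (if v = q then (K : ℚ) else 0) + (if v = u then (if b then (1:ℚ) else -1) else 0)) →
    ∃ L : List Δ.Step, L ≠ [] ∧
      (∀ s ∈ L.head?, s.src = u ∧ s.outSrc = b) ∧
      (∀ s ∈ L.getLast?, s.dst = q ∧ s.outDst = true) ∧
      (L.Chain' fun s t => s.dst = t.src ∧ s.outDst ≠ t.outSrc) ∧
      ∀ x, (L.map Step.e).count x ≤ m x := by
  intro n
  induction n using Nat.strong_induction_on with
  | _ n ih =>
    intro m hsum u b K hK hqb hdiv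
    -- find an available end at `u` with out-flag `b`
    have hend : ∃ x, 0 < m x ∧
        ((Δ.endA x = u ∧ Δ.outA x = b) ∨ (Δ.endB x = u ∧ Δ.outB x = b)) := by
      cases hb : b with
      | true =>
        apply exists_out_end
        rw [hdiv u, if_pos rfl]
        have : (0:ℚ) ≤ (if u = q then (K:ℚ) else 0) := by
          split_ifs
          · exact_mod_cast hK
          · exact le_refl 0
        simp only [hb, if_true]
        linarith
      | false =>
        have huq : u ≠ q := fun h => by simp [hqb h] at hb
        apply exists_in_end
        rw [hdiv u, if_neg huq, if_pos rfl]
        simp [hb]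
    obtain ⟨x, hx, hside⟩ := hend
    -- build the first step
    obtain ⟨s, hse, hsrc, houtSrc⟩ :
        ∃ s : Δ.Step, s.e = x ∧ s.src = u ∧ s.outSrc = b := by
      rcases hside with ⟨h1, h2⟩ | ⟨h1, h2⟩
      · exact ⟨⟨x, true⟩, rfl, h1, h2⟩
      · exact ⟨⟨x, false⟩, rfl, h1, h2⟩
    by_cases hstop : s.dst = q ∧ s.outDst = true
    · refine ⟨[s], by simp, ?_, ?_, List.isChain_singleton s, ?_⟩
      · intro t ht; simp at ht; subst ht; exact ⟨hsrc, houtSrc⟩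
      · intro t ht; simp at ht; subst ht; exact hstop
      · intro y
        simp only [List.map_cons, List.map_nil, hse]
        by_cases hy : y = x
        · subst hy
          have h1 : List.count y [y] = 1 := by simp
          omega
        · rw [List.count_eq_zero.mpr (by simp [hy])]
          exact Nat.zero_le _
    · -- recurse
      have hn : 0 < n := by
        have h1 : m x ≤ ∑ y, m y :=
          Finset.single_le_sum (fun i _ => Nat.zero_le _) (Finset.mem_univ x)
        omega
      set m' := Function.update m x (m x - 1) with hm'
      have hsum' : ∑ y, m' y = n - 1 := by
        rw [hm', Finset.sum_update_of_mem (Finset.mem_univ x)]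
        have h2 : ∑ y, m y = m x + ∑ y ∈ Finset.univ \ {x}, m y :=
          Finset.sum_eq_add_sum_sdiff_singleton_of_mem (Finset.mem_univ x) m
        omega
      have hdiv' : ∀ v, Δ.div (fun y => (m' y : ℚ)) v
          = (if v = q then (K:ℚ) else 0)
            + (if v = s.dst then (if !s.outDst then (1:ℚ) else -1) else 0) := by
        intro v
        have hphi := phi_step s v
        rw [hse] at hphi
        rw [hm', div_update m x hx v, hdiv v, hphi, hsrc, houtSrc]
        have e1 : (if u = v then (if b then (1:ℚ) else -1) else 0)
            = (if v = u then (if b then (1:ℚ) else -1) else 0) := by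
          by_cases h : u = v
          · rw [if_pos h, if_pos h.symm]
          · rw [if_neg h, if_neg (fun hh => h hh.symm)]
        have e2 : (if s.dst = v then (if s.outDst then (1:ℚ) else -1) else 0)
            = -(if v = s.dst then (if !s.outDst then (1:ℚ) else -1) else 0) := by
          by_cases h : s.dst = v
          · rw [if_pos h, if_pos h.symm]; cases s.outDst <;> simp
          · rw [if_neg h, if_neg (fun hh => h hh.symm)]; ring
        rw [e1, e2]; ring
      have hqb' : s.dst = q → (!s.outDst) = true := by
        intro h
        cases hd : s.outDst
        · simp
        · exact absurd ⟨h, hd⟩ hstop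
      obtain ⟨L', hL'ne, hL'head, hL'last, hL'chain, hL'count⟩ :=
        ih (n-1) (by omega) m' hsum' s.dst (!s.outDst) K hK hqb' hdiv'
      refine ⟨s :: L', by simp, ?_, ?_, ?_, ?_⟩
      · intro t ht; simp at ht; subst ht; exact ⟨hsrc, houtSrc⟩
      · intro t ht
        rcases L' with _ | ⟨t0, L''⟩
        · exact absurd rfl hL'ne
        · rw [List.getLast?_cons_cons] at ht
          exact hL'last t ht
      · refine List.isChain_cons.mpr ?_
        refine ⟨?_, hL'chain⟩
        intro t ht
        obtain ⟨h1, h2⟩ := hL'head t ht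
        exact ⟨h1.symm, by rw [h2]; cases s.outDst <;> simp⟩
      · intro y
        rw [List.map_cons, hse]
        by_cases hy : y = x
        · subst hy
          rw [List.count_cons_self]
          have h3 := hL'count y
          rw [hm', Function.update_self] at h3
          omega
        · rw [List.count_cons_of_ne (Ne.symm hy)]
          have h3 := hL'count y
          rwa [hm', Function.update_of_ne hy] at h3

variable (Γ) in
open Classical in
noncomputable def resW (c : Γ.E → ℕ) (g : Γ.E → ℚ) : (Γ.residual c g).E → Γ.E → ℚ :=
  Sum.elim (fun a e => if e = a.1 then (1:ℚ) else 0)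
    (fun a e => -(if e = a.1 then (1:ℚ) else 0))

lemma div_resW (c : Γ.E → ℕ) (g : Γ.E → ℚ) (x : (Γ.residual c g).E) (v : N) :
    Γ.div (resW Γ c g x) v = phi (Γ.residual c g) x v := by
  cases x with
  | inl a =>
      rw [show resW Γ c g (Sum.inl a) = fun e => if e = a.1 then (1:ℚ) else 0 from rfl,
        div_single]
      simp [phi, residual]; rfl
  | inr a =>
      rw [show resW Γ c g (Sum.inr a) = fun e => -(if e = a.1 then (1:ℚ) else 0) from rfl,
        div_neg, div_single]
      simp only [phi, residual, Sum.elim_inr]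
      rcases Bool.eq_false_or_eq_true (Γ.outA a.1) with h1 | h1 <;>
        rcases Bool.eq_false_or_eq_true (Γ.outB a.1) with h2 | h2 <;>
          simp only [h1, h2] <;> split_ifs <;> simp_all

lemma div_listsum (c : Γ.E → ℕ) (g : Γ.E → ℚ) (v : N) :
    ∀ M : List (Γ.residual c g).E,
    Γ.div (fun e => (M.map (fun x => resW Γ c g x e)).sum) v
      = (M.map (fun x => phi (Γ.residual c g) x v)).sum := by
  intro M
  induction M with
  | nil => simpa using div_zero' v
  | cons x M ih =>
      simp only [List.map_cons, List.sum_cons]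
      rw [div_add, div_resW, ih]

open Classical in
lemma listsum_resW (c : Γ.E → ℕ) (g : Γ.E → ℚ) (e : Γ.E) :
    ∀ M : List (Γ.residual c g).E,
    (M.map (fun x => resW Γ c g x e)).sum
      = ((if h : g e < (c e : ℚ) then
            ((M.count (show (Γ.residual c g).E from Sum.inl ⟨e, h⟩) : ℕ) : ℚ) else 0)
        - (if h : 0 < g e then
            ((M.count (show (Γ.residual c g).E from Sum.inr ⟨e, h⟩) : ℕ) : ℚ) else 0)) := by
  intro M
  induction M with
  | nil => simp -zeta
  | cons x M ih =>
      have hcons : ∀ (y : (Γ.residual c g).E) (L : List ((Γ.residual c g).E)),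
          List.count y (x :: L) = List.count y L + (if x = y then 1 else 0) := by
        intro y L
        rw [List.count_cons]
        congr 1
        simp [beq_iff_eq]
      simp -zeta only [List.map_cons, List.sum_cons, ih, hcons]
      have hL : ∀ (a b : Γ.E) (ha : g a < (c a : ℚ)) (hb : g b < (c b : ℚ)),
          (@Eq (Γ.residual c g).E (Sum.inl ⟨a, ha⟩) (Sum.inl ⟨b, hb⟩)) ↔ b = a := by
        intro a b ha hb
        exact ⟨fun h => (congrArg Subtype.val (Sum.inl.inj h)).symm, by rintro rfl; rfl⟩
      have hR : ∀ (a b : Γ.E) (ha : 0 < g a) (hb : 0 < g b),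
          (@Eq (Γ.residual c g).E (Sum.inr ⟨a, ha⟩) (Sum.inr ⟨b, hb⟩)) ↔ b = a := by
        intro a b ha hb
        exact ⟨fun h => (congrArg Subtype.val (Sum.inr.inj h)).symm, by rintro rfl; rfl⟩
      rcases x with ⟨a, ha⟩ | ⟨a, ha⟩ <;> simp only [resW, Sum.elim_inl, Sum.elim_inr] <;> split_ifs <;> simp_all [hL, hR] <;> push_cast <;> linarith


open Classical in
lemma div_int (f : Γ.E → ℚ) (hf : ∀ e, ∃ zz : ℤ, f e = (zz : ℚ)) (v : N) :
    ∃ zz : ℤ, Γ.div f v = (zz : ℚ) := by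
  choose z hz using hf
  refine ⟨(∑ e, if Γ.endA e = v then (if Γ.outA e then z e else -z e) else 0)
    + (∑ e, if Γ.endB e = v then (if Γ.outB e then z e else -z e) else 0), ?_⟩
  simp only [div]
  push_cast
  congr 1
  all_goals
    apply Finset.sum_congr rfl
    intro e _
    rw [hz e]
    try (split_ifs <;> push_cast <;> try ring)

open Classical in
lemma div_residual_eq (c : Γ.E → ℕ) (g : Γ.E → ℚ) (w : Γ.E → ℚ)
    (mF mB : Γ.E → ℕ)
    (hkey : ∀ e, (if g e < (c e : ℚ) then (mF e : ℚ) else 0)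
      - (if 0 < g e then (mB e : ℚ) else 0) = w e) (v : N) :
    (Γ.residual c g).div
      (fun x => ((Sum.elim (fun a => mF a.1) (fun a => mB a.1) x : ℕ) : ℚ)) v
      = Γ.div w v := by
  have hsub : ∀ (p : Γ.E → Prop) (F : Γ.E → ℚ),
      (∑ a : {e // p e}, F a.1) = ∑ e, if p e then F e else 0 := by
    intro p F
    rw [← Finset.sum_filter]
    exact (Finset.sum_subtype (Finset.univ.filter p) (fun x => by simp) F).symm
  have hsplit : ∀ F : (Γ.residual c g).E → ℚ,
      (∑ x, F x) = (∑ a : {e // g e < (c e : ℚ)}, F (Sum.inl a))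
        + ∑ b : {e // 0 < g e}, F (Sum.inr b) := by
    intro F
    rw [Subsingleton.elim ((Γ.residual c g).fintypeE) (instFintypeSum _ _)]
    exact Fintype.sum_sum_type F
  have merge : ∀ (X1 X2 Y : Γ.E → ℚ), (∀ e, X1 e + X2 e = Y e) →
      ((∑ e, X1 e) + (∑ e, X2 e)) = ∑ e, Y e := by
    intro X1 X2 Y h
    rw [← Finset.sum_add_distrib]
    exact Finset.sum_congr rfl (fun e _ => h e)
  simp only [div]
  rw [hsplit, hsplit]
  simp only [residual, Sum.elim_inl, Sum.elim_inr]
  have e1 : (∑ x : {e // g e < (c e : ℚ)}, if Γ.endA x.1 = v then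
        (if Γ.outA x.1 = true then (mF x.1 : ℚ) else -(mF x.1 : ℚ)) else 0)
      = ∑ e, if g e < (c e : ℚ) then (if Γ.endA e = v then
        (if Γ.outA e = true then (mF e : ℚ) else -(mF e : ℚ)) else 0) else 0 := by
    conv_rhs => rw [← Finset.sum_filter]
    exact (Finset.sum_subtype (Finset.univ.filter (fun e => g e < (c e : ℚ))) (fun x => by simp)
      (fun e => if Γ.endA e = v then (if Γ.outA e = true then (mF e : ℚ) else -(mF e : ℚ)) else 0)).symm
  have e2 : (∑ x : {e // 0 < g e}, if Γ.endA x.1 = v then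
        (if (!Γ.outA x.1) = true then (mB x.1 : ℚ) else -(mB x.1 : ℚ)) else 0)
      = ∑ e, if 0 < g e then (if Γ.endA e = v then
        (if (!Γ.outA e) = true then (mB e : ℚ) else -(mB e : ℚ)) else 0) else 0 := by
    conv_rhs => rw [← Finset.sum_filter]
    exact (Finset.sum_subtype (Finset.univ.filter (fun e => 0 < g e)) (fun x => by simp)
      (fun e => if Γ.endA e = v then (if (!Γ.outA e) = true then (mB e : ℚ) else -(mB e : ℚ)) else 0)).symm
  have e3 : (∑ x : {e // g e < (c e : ℚ)}, if Γ.endB x.1 = v then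
        (if Γ.outB x.1 = true then (mF x.1 : ℚ) else -(mF x.1 : ℚ)) else 0)
      = ∑ e, if g e < (c e : ℚ) then (if Γ.endB e = v then
        (if Γ.outB e = true then (mF e : ℚ) else -(mF e : ℚ)) else 0) else 0 := by
    conv_rhs => rw [← Finset.sum_filter]
    exact (Finset.sum_subtype (Finset.univ.filter (fun e => g e < (c e : ℚ))) (fun x => by simp)
      (fun e => if Γ.endB e = v then (if Γ.outB e = true then (mF e : ℚ) else -(mF e : ℚ)) else 0)).symm
  have e4 : (∑ x : {e // 0 < g e}, if Γ.endB x.1 = v then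
        (if (!Γ.outB x.1) = true then (mB x.1 : ℚ) else -(mB x.1 : ℚ)) else 0)
      = ∑ e, if 0 < g e then (if Γ.endB e = v then
        (if (!Γ.outB e) = true then (mB e : ℚ) else -(mB e : ℚ)) else 0) else 0 := by
    conv_rhs => rw [← Finset.sum_filter]
    exact (Finset.sum_subtype (Finset.univ.filter (fun e => 0 < g e)) (fun x => by simp)
      (fun e => if Γ.endB e = v then (if (!Γ.outB e) = true then (mB e : ℚ) else -(mB e : ℚ)) else 0)).symm
  refine (congrArg₂ (· + ·) (congrArg₂ (· + ·) e1 e2) (congrArg₂ (· + ·) e3 e4)).trans ?_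
  congr 1
  · apply merge
    intro e
    have hk := hkey e
    by_cases h1 : Γ.endA e = v
    · simp only [h1, eq_self_iff_true, if_true]
      rw [← hk]
      cases h2 : Γ.outA e <;> simp [h2] <;> split_ifs <;> ring
    · simp [h1]
  · apply merge
    intro e
    have hk := hkey e
    by_cases h1 : Γ.endB e = v
    · simp only [h1, eq_self_iff_true, if_true]
      rw [← hk]
      cases h2 : Γ.outB e <;> simp [h2] <;> split_ifs <;> ring
    · simp [h1]


end BDGraph

open Classical in
/-- an integer bidirected `q`-flow `g` is maximum if and only if
the residual bidirected graph contains no closed `q`–`q` walk leaving `q`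
twice that traverses each residual edge `e` at most `c_g(e)` times. -/
theorem IBDFlow_maximum_iff_no_residual_walk
    {N : Type} (Γ : BDGraph N) (q : N)
    (hq : ∀ e, (Γ.endA e = q → Γ.outA e = true) ∧
      (Γ.endB e = q → Γ.outB e = true))
    (c : Γ.E → ℕ) (g : Γ.E → ℚ)
    (hflow : Γ.IsBDFlow q g) (hfeas : Γ.FlowFeasible c g)
    (hint : Γ.IsIntegral g) :
    (∀ f : Γ.E → ℚ, Γ.IsBDFlow q f → Γ.FlowFeasible c f → Γ.IsIntegral f →
        Γ.div f q ≤ Γ.div g q) ↔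
      ¬ ∃ L : List (Γ.residual c g).Step,
        (Γ.residual c g).IsClosedQWalk q L ∧
        ∀ e : (Γ.residual c g).E,
          ((L.map BDGraph.Step.e).count e : ℚ) ≤ Γ.resCap c g e := by

  classical
  constructor
  · -- maximal implies no residual walk
    intro hmax hex
    obtain ⟨L, ⟨⟨hne, hhead, hlast, hchain⟩, hheadout, hlastout⟩, hcount⟩ := hex
    rcases L with _ | ⟨s0, L0⟩
    · exact hne rfl
    set M : List (Γ.residual c g).E := (s0 :: L0).map BDGraph.Step.e with hM
    set f : Γ.E → ℚ :=
      fun e => g e + (M.map (fun x => BDGraph.resW Γ c g x e)).sum with hf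
    have hs0 : s0.src = q := hhead s0 rfl
    have hs0out : s0.outSrc = true := hheadout s0 rfl
    have hlastmem : (s0 :: L0).getLast? = some ((s0 :: L0).getLast (by simp)) :=
      List.getLast?_eq_getLast (by simp)
    have hlq : ((s0 :: L0).getLast (by simp)).dst = q := hlast _ hlastmem
    have hlout : ((s0 :: L0).getLast (by simp)).outDst = true := hlastout _ hlastmem
    have hdivf : ∀ v, Γ.div f v = Γ.div g v + (if q = v then (2:ℚ) else 0) := by
      intro v
      rw [hf, BDGraph.div_add, BDGraph.div_listsum]
      congr 1
      have hphis := BDGraph.sum_phi_walk (Γ := Γ.residual c g) v L0 s0 hchain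
      rw [hM, List.map_map]
      rw [show ((fun x => BDGraph.phi (Γ.residual c g) x v) ∘ BDGraph.Step.e)
          = (fun t : (Γ.residual c g).Step => BDGraph.phi (Γ.residual c g) t.e v) from rfl]
      rw [hphis, hs0, hs0out, hlq, hlout]
      simp only [eq_self_iff_true, if_true]
      split_ifs <;> norm_num
    have hfbd : ∀ e, 0 ≤ f e ∧ f e ≤ (c e : ℚ) := by
      intro e
      have hls := BDGraph.listsum_resW c g e M
      have hcF : (if h : g e < (c e : ℚ) then
          ((M.count (show (Γ.residual c g).E from Sum.inl ⟨e, h⟩) : ℕ) : ℚ) else 0)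
          ≤ (c e : ℚ) - g e := by
        split_ifs with h
        · have := hcount (show (Γ.residual c g).E from Sum.inl ⟨e, h⟩)
          simpa [BDGraph.resCap, hM] using this
        · push_neg at h; linarith [hfeas e]
      have hcB : (if h : 0 < g e then
          ((M.count (show (Γ.residual c g).E from Sum.inr ⟨e, h⟩) : ℕ) : ℚ) else 0)
          ≤ g e := by
        split_ifs with h
        · have := hcount (show (Γ.residual c g).E from Sum.inr ⟨e, h⟩)
          simpa [BDGraph.resCap, hM] using this
        · linarith [hflow.1 e]
      have hcF0 : 0 ≤ (if h : g e < (c e : ℚ) then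
          ((M.count (show (Γ.residual c g).E from Sum.inl ⟨e, h⟩) : ℕ) : ℚ) else 0) := by
        split_ifs <;> positivity
      have hcB0 : 0 ≤ (if h : 0 < g e then
          ((M.count (show (Γ.residual c g).E from Sum.inr ⟨e, h⟩) : ℕ) : ℚ) else 0) := by
        split_ifs <;> positivity
      constructor
      · simp only [hf]; rw [hls]; linarith
      · simp only [hf]; rw [hls]; linarith
    have hfflow : Γ.IsBDFlow q f := by
      refine ⟨fun e => (hfbd e).1, fun v hv => ?_⟩
      rw [hdivf v, hflow.2 v hv, if_neg (fun h => hv h.symm)]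
      ring
    have hffeas : Γ.FlowFeasible c f := fun e => (hfbd e).2
    have hfint : Γ.IsIntegral f := by
      intro e
      obtain ⟨z0, hz0⟩ := hint e
      refine ⟨z0 + ((if h : g e < (c e : ℚ) then
          (M.count (show (Γ.residual c g).E from Sum.inl ⟨e, h⟩) : ℤ) else 0)
        - (if h : 0 < g e then
          (M.count (show (Γ.residual c g).E from Sum.inr ⟨e, h⟩) : ℤ) else 0)), ?_⟩
      simp only [hf]
      rw [BDGraph.listsum_resW c g e M]
      split_ifs <;> push_cast <;> linarith [hz0]
    have := hmax f hfflow hffeas hfint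
    rw [hdivf q, if_pos rfl] at this
    linarith
  · -- no residual walk implies maximal
    intro hno f hfflow hffeas hfint
    by_contra hlt
    rw [not_le] at hlt
    choose zf hzf using hfint
    choose zg hzg using hint
    obtain ⟨z, hzeq⟩ : ∃ z : Γ.E → ℤ, ∀ e, z e = zf e - zg e := ⟨_, fun _ => rfl⟩
    have hze : ∀ e, f e - g e = (z e : ℚ) := by
      intro e; rw [hzeq e, hzf, hzg]; push_cast; ring
    obtain ⟨mF, hmFe⟩ : ∃ F : Γ.E → ℕ, ∀ e, F e = (z e).toNat := ⟨_, fun _ => rfl⟩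
    obtain ⟨mB, hmBe⟩ : ∃ F : Γ.E → ℕ, ∀ e, F e = (-(z e)).toNat := ⟨_, fun _ => rfl⟩
    obtain ⟨m, hmeq⟩ : ∃ m : (Γ.residual c g).E → ℕ,
        m = Sum.elim (fun a => mF a.1) (fun a => mB a.1) := ⟨_, rfl⟩
    have hkey : ∀ e, (if g e < (c e : ℚ) then (mF e : ℚ) else 0)
        - (if 0 < g e then (mB e : ℚ) else 0) = f e - g e := by
      intro e
      rw [hze e]
      have hzc : ∀ (y : ℤ), 0 ≤ y → ((y.toNat : ℕ) : ℚ) = (y : ℚ) := by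
        intro y hy
        exact_mod_cast Int.toNat_of_nonneg hy
      rcases lt_trichotomy (z e) 0 with hz | hz | hz
      · have hzq : (z e : ℚ) < 0 := by exact_mod_cast hz
        have hg0 : 0 < g e := by
          have h1 := hfflow.1 e
          linarith [hze e]
        have h1 : (mB e : ℚ) = -(z e : ℚ) := by
          rw [hmBe]
          have := hzc (-(z e)) (by omega)
          push_cast at this ⊢
          linarith [this]
        have h2 : (mF e : ℚ) = 0 := by
          have h3 : (z e).toNat = 0 := by omega
          rw [hmFe, h3]; simp
        rw [if_pos hg0, h1, h2]
        split_ifs <;> ring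
      · have h2 : (mF e : ℚ) = 0 := by
          have h3 : (z e).toNat = 0 := by omega
          rw [hmFe, h3]; simp
        have h1 : (mB e : ℚ) = 0 := by
          have h3 : (-(z e)).toNat = 0 := by omega
          rw [hmBe, h3]; simp
        have hzq : (z e : ℚ) = 0 := by exact_mod_cast hz
        rw [hzq, h1, h2]
        split_ifs <;> ring
        
      · have hzq : (0:ℚ) < (z e : ℚ) := by exact_mod_cast hz
        have hgc : g e < (c e : ℚ) := by
          have h1 := hffeas e
          linarith [hze e]
        have h1 : (mF e : ℚ) = (z e : ℚ) := by
          rw [hmFe]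
          have := hzc (z e) (by omega)
          push_cast at this ⊢
          linarith [this]
        have h2 : (mB e : ℚ) = 0 := by
          have h3 : (-(z e)).toNat = 0 := by omega
          rw [hmBe, h3]; simp
        rw [if_pos hgc, h1, h2]
        split_ifs <;> ring
    have hdivm : ∀ v, (Γ.residual c g).div (fun x => (m x : ℚ)) v
        = Γ.div f v - Γ.div g v := by
      intro v
      rw [← BDGraph.div_sub, hmeq]
      have hk2 : ∀ e, (if g e < (c e : ℚ) then (mF e : ℚ) else 0)
          - (if 0 < g e then (mB e : ℚ) else 0) = (fun e => f e - g e) e := hkey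
      exact BDGraph.div_residual_eq c g (fun e => f e - g e) mF mB hk2 v
    obtain ⟨df, hdf⟩ := BDGraph.div_int f (fun e => ⟨zf e, hzf e⟩) q
    obtain ⟨dg, hdg⟩ := BDGraph.div_int g (fun e => ⟨zg e, hzg e⟩) q
    set K : ℤ := df - dg - 1 with hKdef
    have hK : 0 ≤ K := by
      have h1 : (dg : ℚ) < (df : ℚ) := by rw [← hdf, ← hdg]; exact hlt
      have : dg < df := by exact_mod_cast h1
      omega
    have hdivhyp : ∀ v, (Γ.residual c g).div (fun x => (m x : ℚ)) v
        = (if v = q then (K : ℚ) else 0)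
          + (if v = q then (if (true : Bool) then (1:ℚ) else -1) else 0) := by
      intro v
      rw [hdivm v]
      by_cases hv : v = q
      · subst hv
        rw [hdf, hdg, if_pos rfl, if_pos rfl, hKdef]
        push_cast
        norm_num
      · rw [hfflow.2 v hv, hflow.2 v hv, if_neg hv, if_neg hv]
        ring
    obtain ⟨L, hne, hhead, hlast, hchain, hcount⟩ :=
      BDGraph.extract (Γ.residual c g) q (∑ x, m x) m rfl q true K hK
        (fun _ => rfl) hdivhyp
    apply hno
    refine ⟨L, ⟨⟨hne, fun s hs => (hhead s hs).1, fun s hs => (hlast s hs).1, hchain⟩,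
      fun s hs => (hhead s hs).2, fun s hs => (hlast s hs).2⟩, ?_⟩
    intro x
    have h1 : ((L.map BDGraph.Step.e).count x : ℚ) ≤ (m x : ℚ) := by
      exact_mod_cast hcount x
    refine le_trans h1 ?_
    rcases x with ⟨a, ha⟩ | ⟨a, ha⟩
    · rw [hmeq]
      simp only [Sum.elim_inl, BDGraph.resCap]
      rcases le_or_gt (z a) 0 with h | h
      · have h3 : (z a).toNat = 0 := by omega
        rw [hmFe, h3]
        push_cast
        linarith [ha]
      · have h3 : ((z a).toNat : ℚ) = (z a : ℚ) := by
          exact_mod_cast Int.toNat_of_nonneg (le_of_lt h)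
        rw [hmFe]
        push_cast at h3 ⊢
        rw [h3, ← hze]
        linarith [hffeas a]
    · rw [hmeq]
      simp only [Sum.elim_inr, BDGraph.resCap]
      rcases le_or_gt 0 (z a) with h | h
      · have h3 : (-(z a)).toNat = 0 := by omega
        rw [hmBe, h3]
        push_cast
        linarith [ha]
      · have h3 : ((-(z a)).toNat : ℚ) = -(z a : ℚ) := by
          have := Int.toNat_of_nonneg (show (0:ℤ) ≤ -(z a) by omega)
          exact_mod_cast this
        rw [hmBe]
        push_cast at h3 ⊢
        rw [h3]
        have h4 := hze a
        have h5 := hfflow.1 a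
        linarith
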